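/- Suppose that a group G is weakly hyperbolic relative to the collection of subgroups {A, B, C₁, …, Cₘ}, where A and B are conjugate subgroups of G (i.e. B = gAg⁻¹ for some g ∈ G). Then G is weakly hyperbolic relative to {A, C₁, …, Cₘ}. -/

import Mathlib

/-- The Cayley graph of a group `G` with respect to a set `S` of generators: two distinct
elements `a b : G` are adjacent iff they differ by right multiplication by an element of
`S` or the inverse of an element of `S`. -/
def cayleyGraph (G : Type*) [Group G] (S : Set G) : SimpleGraph G where
  Adj a b := a ≠ b ∧ (a⁻¹ * b ∈ S ∨ b⁻¹ * a ∈ S)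
  symm := by
    constructor
    rintro a b ⟨hne, h⟩
    exact ⟨hne.symm, h.symm⟩
  loopless := by constructor; rintro a ⟨hne, -⟩; exact hne rfl

/-- A walk in a graph is a (discrete) geodesic if its length equals the combinatorial
distance between its endpoints. -/
def SimpleGraph.IsGeodesic {V : Type*} (Γ : SimpleGraph V) {u v : V} (p : Γ.Walk u v) : Prop :=
  p.length = Γ.dist u v

/-- A graph is hyperbolic (as a geodesic metric space, with the combinatorial metric in
which every edge has length `1`) iff there is `δ ≥ 0` such that each side of every
geodesic triangle is contained in the closed `δ`-neighbourhood of the union of the other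
two sides. -/
def SimpleGraph.IsHyperbolic {V : Type*} (Γ : SimpleGraph V) : Prop :=
  ∃ δ : ℕ, ∀ (u v w : V) (p : Γ.Walk u v) (q : Γ.Walk v w) (r : Γ.Walk u w),
    Γ.IsGeodesic p → Γ.IsGeodesic q → Γ.IsGeodesic r →
    ∀ x ∈ r.support, ∃ y, (y ∈ p.support ∨ y ∈ q.support) ∧ Γ.dist x y ≤ δ

/-- `X ⊆ G` is a relative generating set of `G` with respect to the collection of
subgroups `H i`, i.e. `G` is generated by `X` together with all the `H i`. -/
def IsRelGenSet {G : Type*} [Group G] {ι : Type*} (H : ι → Subgroup G) (X : Set G) : Prop :=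
  Subgroup.closure (X ∪ ⋃ i, (H i : Set G)) = ⊤

/-- The relative Cayley graph of `G` with respect to the collection of subgroups `H i`
and the set `X`: the Cayley graph of `G` with respect to the generating set
`X ∪ ⋃ i, H i`. -/
def relCayleyGraph (G : Type*) [Group G] {ι : Type*} (H : ι → Subgroup G) (X : Set G) :
    SimpleGraph G :=
  cayleyGraph G (X ∪ ⋃ i, (H i : Set G))

/-- `G` is weakly hyperbolic relative to the collection of subgroups `H i` if there is a
finite relative generating set `X` of `G` with respect to the `H i` such that the
corresponding relative Cayley graph is hyperbolic. -/
def IsWeaklyRelativelyHyperbolic (G : Type*) [Group G] {ι : Type*} (H : ι → Subgroup G) :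
    Prop :=
  ∃ X : Set G, X.Finite ∧ IsRelGenSet H X ∧ (relCayleyGraph G H X).IsHyperbolic

namespace OsinAux

open SimpleGraph Walk

variable {V : Type*} {Γ : SimpleGraph V}

@[simp] lemma getVert_nil {u : V} (n : ℕ) : (Walk.nil : Γ.Walk u u).getVert n = u := rfl

/-- Initial segment of a walk, of length `min n p.length`. -/
def takeW : {u v : V} → (p : Γ.Walk u v) → (n : ℕ) → Γ.Walk u (p.getVert n)
  | _, _, .nil, _ => .nil
  | _, _, .cons _ _, 0 => .nil
  | _, _, .cons h q, n+1 => .cons h (takeW q n)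

/-- Final segment of a walk starting at vertex `n`. -/
def dropW : {u v : V} → (p : Γ.Walk u v) → (n : ℕ) → Γ.Walk (p.getVert n) v
  | _, _, .nil, _ => .nil
  | _, _, .cons h q, 0 => .cons h q
  | _, _, .cons _ q, n+1 => dropW q n

@[simp] lemma length_takeW : ∀ {u v : V} (p : Γ.Walk u v) (n : ℕ),
    (takeW p n).length = min n p.length
  | _, _, .nil, n => by simp [takeW]
  | _, _, .cons _ _, 0 => by simp [takeW]; rfl
  | _, _, .cons h q, n+1 => by
      simp [takeW, length_takeW q n, Nat.succ_min_succ]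

@[simp] lemma length_dropW : ∀ {u v : V} (p : Γ.Walk u v) (n : ℕ),
    (dropW p n).length = p.length - n
  | _, _, .nil, n => by simp [dropW]
  | _, _, .cons _ _, 0 => by simp [dropW]; rfl
  | _, _, .cons h q, n+1 => by simp [dropW, length_dropW q n]

lemma getVert_takeW : ∀ {u v : V} (p : Γ.Walk u v) {n i : ℕ}, i ≤ n →
    (takeW p n).getVert i = p.getVert i
  | _, _, .nil, n, i, _ => by simp [takeW]
  | _, _, .cons _ _, 0, i, hi => by
      simp_all [takeW]; rfl
  | _, _, .cons h q, n+1, 0, _ => by simp [takeW]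
  | _, _, .cons h q, n+1, i+1, hi => by
      simpa [takeW] using getVert_takeW q (Nat.succ_le_succ_iff.mp hi)

lemma getVert_dropW : ∀ {u v : V} (p : Γ.Walk u v) (n i : ℕ),
    (dropW p n).getVert i = p.getVert (n + i)
  | _, _, .nil, n, i => rfl
  | _, _, .cons _ _, 0, i => by simp [dropW]; rfl
  | _, _, .cons h q, n+1, i => by
      rw [show n+1+i = (n+i)+1 by omega]
      simpa [dropW, Walk.getVert_cons_succ] using getVert_dropW q n i

lemma support_takeW_subset : ∀ {u v : V} (p : Γ.Walk u v) (n : ℕ),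
    (takeW p n).support ⊆ p.support
  | _, _, .nil, n => by simp [takeW]
  | _, _, .cons _ _, 0 => by simp [takeW]; show [_] ⊆ _; simp
  | _, _, .cons h q, n+1 => by
      intro x hx
      rcases (by simpa [takeW] using hx) with h' | h'
      · simp [h']
      · simp [support_takeW_subset q n h']

lemma support_dropW_subset : ∀ {u v : V} (p : Γ.Walk u v) (n : ℕ),
    (dropW p n).support ⊆ p.support
  | _, _, .nil, n => by simp [dropW]
  | _, _, .cons _ _, 0 => by simp [dropW]; exact fun _ hx => hx
  | _, _, .cons h q, n+1 => by
      intro x hx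
      simp [support_cons]
      exact Or.inr (support_dropW_subset q n hx)

/-- A walk from `p.getVert i` to `p.getVert j` of length `≤ j - i`. -/
def segW {u v : V} (p : Γ.Walk u v) (i j : ℕ) (hij : i ≤ j) :
    Γ.Walk (p.getVert i) (p.getVert j) :=
  (takeW (dropW p i) (j - i)).copy rfl
    (by rw [getVert_dropW, Nat.add_sub_cancel' hij])

lemma length_segW {u v : V} (p : Γ.Walk u v) (i j : ℕ) (hij : i ≤ j) :
    (segW p i j hij).length ≤ j - i := by
  simp [segW]

lemma reachable_getVert {u v : V} (p : Γ.Walk u v) (i j : ℕ) (hij : i ≤ j) :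
    Γ.Reachable (p.getVert i) (p.getVert j) := ⟨segW p i j hij⟩

lemma dist_getVert_le {u v : V} (p : Γ.Walk u v) {i j : ℕ} (hij : i ≤ j) :
    Γ.dist (p.getVert i) (p.getVert j) ≤ j - i :=
  le_trans (SimpleGraph.dist_le (segW p i j hij)) (length_segW p i j hij)

lemma dist_getVert_eq {u v : V} {p : Γ.Walk u v} (hp : Γ.IsGeodesic p)
    {i j : ℕ} (hij : i ≤ j) (hj : j ≤ p.length) :
    Γ.dist (p.getVert i) (p.getVert j) = j - i := by
  refine le_antisymm (dist_getVert_le p hij) ?_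
  obtain ⟨W, hW⟩ := (reachable_getVert p i j hij).exists_walk_length_eq_dist
  have h1 : (takeW p i).length = i := by simp [Nat.le_trans hij hj]
  have h2 : (dropW p j).length = p.length - j := by simp
  have key : Γ.dist u v ≤ i + W.length + (p.length - j) := by
    have := SimpleGraph.dist_le (((takeW p i).append W).append (dropW p j))
    simpa [Walk.length_append, h1, h2, add_assoc] using this
  rw [← hp] at key
  omega

lemma dist_start_le_of_mem_support {u v : V} {p : Γ.Walk u v} {x : V}
    (hx : x ∈ p.support) : Γ.dist u x ≤ p.length := by
  obtain ⟨n, rfl, hn⟩ := Walk.mem_support_iff_exists_getVert.mp hx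
  have := dist_getVert_le p (Nat.zero_le n)
  simpa using this.trans (by omega)

lemma getVert_mem_support {u v : V} (p : Γ.Walk u v) (n : ℕ) :
    p.getVert n ∈ p.support := by
  rcases le_or_gt n p.length with h | h
  · exact Walk.mem_support_iff_exists_getVert.mpr ⟨n, rfl, h⟩
  · rw [Walk.getVert_of_length_le p h.le]
    exact Walk.end_mem_support p

/-! ### Thinness, divergence, and the Morse lemma -/

/-- The `δ`-thin triangles property. -/
def Thin (Γ : SimpleGraph V) (δ : ℕ) : Prop :=
  ∀ (u v w : V) (p : Γ.Walk u v) (q : Γ.Walk v w) (r : Γ.Walk u w),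
    Γ.IsGeodesic p → Γ.IsGeodesic q → Γ.IsGeodesic r →
    ∀ x ∈ r.support, ∃ y, (y ∈ p.support ∨ y ∈ q.support) ∧ Γ.dist x y ≤ δ

lemma isHyperbolic_iff_thin : Γ.IsHyperbolic ↔ ∃ δ, Thin Γ δ := Iff.rfl

lemma two_mul_le_pow (δ m : ℕ) : 2*(δ*m) ≤ 4*(δ*δ) + 2^m := by
  induction m with
  | zero => simp
  | succ m ih =>
    by_cases h : 2*δ ≤ 2^m
    · have e : 2*(δ*(m+1)) = 2*(δ*m) + 2*δ := by ring
      rw [e, pow_succ]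
      omega
    · push_neg at h
      have hm : m + 1 ≤ 2*δ := by
        have := Nat.lt_two_pow_self (n := m); omega
      calc 2*(δ*(m+1)) = δ*(2*(m+1)) := by ring
        _ ≤ δ*(2*(2*δ)) := Nat.mul_le_mul_left _ (by omega)
        _ = 4*(δ*δ) := by ring
        _ ≤ 4*(δ*δ) + 2^(m+1) := Nat.le_add_right _ _

lemma clog_le_log_succ (n : ℕ) : Nat.clog 2 n ≤ Nat.log 2 n + 1 :=
  (Nat.clog_le_iff_le_pow one_lt_two).mpr (Nat.lt_pow_succ_log_self one_lt_two n).le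

lemma clog_mul_le (a b : ℕ) : Nat.clog 2 (a*b) ≤ Nat.clog 2 a + Nat.clog 2 b := by
  refine (Nat.clog_le_iff_le_pow one_lt_two).mpr ?_
  rw [pow_add]
  exact Nat.mul_le_mul (Nat.le_pow_clog one_lt_two a) (Nat.le_pow_clog one_lt_two b)

/-- The Morse constant for quasigeodesic stability. -/
def Ma (δ k : ℕ) : ℕ := 2*(k + 1 + δ + δ * Nat.clog 2 (8*(k*k))) + 4*(δ*δ)

/-- The second Morse constant. -/
def Mb (δ k : ℕ) : ℕ := k*(k*(2*(Ma δ k) + 1)) + Ma δ k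

lemma k_le_Ma (δ k : ℕ) : k ≤ Ma δ k := by
  unfold Ma
  generalize δ * Nat.clog 2 (8*(k*k)) = P
  generalize δ*δ = Q
  omega

lemma morse_arith {δ k D : ℕ} (hD : 1 ≤ D)
    (h : D ≤ δ * Nat.clog 2 (8*(k*k)*D) + 1 + k) : D ≤ Ma δ k := by
  have h1 : Nat.clog 2 (8*(k*k)*D) ≤ Nat.clog 2 (8*(k*k)) + Nat.clog 2 D :=
    clog_mul_le _ _
  have h2 : Nat.clog 2 D ≤ Nat.log 2 D + 1 := clog_le_log_succ D
  have h3 : 2*(δ*(Nat.log 2 D)) ≤ 4*(δ*δ) + 2^(Nat.log 2 D) := two_mul_le_pow δ _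
  have h4 : 2^(Nat.log 2 D) ≤ D := Nat.pow_log_le_self 2 (by omega)
  have e1 : δ * Nat.clog 2 (8*(k*k)*D) ≤
      δ * Nat.clog 2 (8*(k*k)) + δ * Nat.log 2 D + δ := by
    calc δ * Nat.clog 2 (8*(k*k)*D)
        ≤ δ * (Nat.clog 2 (8*(k*k)) + (Nat.log 2 D + 1)) :=
          Nat.mul_le_mul_left _ (by omega)
      _ = δ * Nat.clog 2 (8*(k*k)) + δ * Nat.log 2 D + δ := by ring
  unfold Ma
  generalize hP : δ * Nat.clog 2 (8*(k*k)) = P at e1 ⊢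
  generalize hQ : δ*δ = Q at h3 ⊢
  generalize hR : δ * Nat.log 2 D = R at e1 h3
  generalize hS : δ * Nat.clog 2 (8*(k*k)*D) = S at e1 h
  generalize hT : (2:ℕ)^(Nat.log 2 D) = T at h3 h4
  omega

/-- Exponential divergence: any point on a geodesic is within
`δ * clog 2 L + 1` of any walk with the same endpoints and length at most `L`. -/
lemma divergence (hconn : Γ.Connected) {δ : ℕ} (hthin : Thin Γ δ) :
    ∀ (L : ℕ) {u v : V} (p : Γ.Walk u v), p.length ≤ L →
      ∀ (γ : Γ.Walk u v), Γ.IsGeodesic γ →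
      ∀ x ∈ γ.support, ∃ y ∈ p.support, Γ.dist x y ≤ δ * Nat.clog 2 L + 1 := by
  intro L
  induction L using Nat.strong_induction_on with
  | _ L IH =>
    intro u v p hp γ hγ x hx
    rcases le_or_gt L 1 with hL | hL
    · refine ⟨u, p.start_mem_support, ?_⟩
      obtain ⟨n, rfl, hn⟩ := Walk.mem_support_iff_exists_getVert.mp hx
      have h1 : Γ.dist u (γ.getVert n) ≤ n := by
        simpa using dist_getVert_le γ (Nat.zero_le n)
      have h3 : γ.length ≤ 1 := by
        have h4 := SimpleGraph.dist_le p
        rw [← hγ] at h4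
        omega
      rw [SimpleGraph.dist_comm]
      have hc : Nat.clog 2 L = 0 := Nat.clog_of_right_le_one hL 2
      omega
    · set t := (L+1)/2 with ht
      set m := p.getVert t with hm
      obtain ⟨γ₁, hγ₁⟩ := hconn.exists_walk_length_eq_dist u m
      obtain ⟨γ₂, hγ₂⟩ := hconn.exists_walk_length_eq_dist m v
      obtain ⟨y, hy, hxy⟩ := hthin u m v γ₁ γ₂ γ hγ₁ hγ₂ hγ x hx
      have hrec : Nat.clog 2 L = Nat.clog 2 ((L+1)/2) + 1 := by
        have h := Nat.clog_of_two_le one_lt_two (by omega : 2 ≤ L)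
        simpa using h
      have harith : ∀ d1 d2 : ℕ, d1 ≤ δ → d2 ≤ δ * Nat.clog 2 ((L+1)/2) + 1 →
          d1 + d2 ≤ δ * Nat.clog 2 L + 1 := by
        intro d1 d2 h1 h2
        have e : δ * (Nat.clog 2 ((L+1)/2) + 1) = δ * Nat.clog 2 ((L+1)/2) + δ := by ring
        rw [hrec]
        generalize hP : δ * Nat.clog 2 ((L+1)/2) = P at h2 e
        omega
      rcases hy with hy | hy
      · obtain ⟨z, hz, hyz⟩ := IH ((L+1)/2) (by omega) (takeW p t)
          (by rw [length_takeW]; omega) γ₁ hγ₁ y hy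
        refine ⟨z, support_takeW_subset p t hz, ?_⟩
        calc Γ.dist x z ≤ Γ.dist x y + Γ.dist y z := hconn.dist_triangle
          _ ≤ δ * Nat.clog 2 L + 1 := harith _ _ hxy hyz
      · obtain ⟨z, hz, hyz⟩ := IH ((L+1)/2) (by omega) (dropW p t)
          (by rw [length_dropW]; omega) γ₂ hγ₂ y hy
        refine ⟨z, support_dropW_subset p t hz, ?_⟩
        calc Γ.dist x z ≤ Γ.dist x y + Γ.dist y z := hconn.dist_triangle
          _ ≤ δ * Nat.clog 2 L + 1 := harith _ _ hxy hyz

/-- A walk interpolating a chain of points with gaps at most `k`. -/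
lemma chain_walk (hconn : Γ.Connected) {f : ℕ → V} {N k : ℕ}
    (hgap : ∀ i < N, Γ.dist (f i) (f (i+1)) ≤ k) :
    ∀ (a n : ℕ), a + n ≤ N → ∃ W : Γ.Walk (f a) (f (a+n)),
      W.length ≤ k * n ∧ ∀ w ∈ W.support, ∃ t ≤ N, Γ.dist w (f t) ≤ k := by
  intro a n
  induction n with
  | zero =>
    intro _
    refine ⟨Walk.nil, by simp, ?_⟩
    intro w hw
    simp only [Walk.support_nil, List.mem_singleton] at hw
    subst hw
    exact ⟨a, by omega, by simp [SimpleGraph.dist_self]⟩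
  | succ n ih =>
    intro h
    obtain ⟨W1, hW1l, hW1s⟩ := ih (by omega)
    obtain ⟨W2, hW2⟩ := hconn.exists_walk_length_eq_dist (f (a+n)) (f (a+n+1))
    refine ⟨W1.append W2, ?_, ?_⟩
    · rw [Walk.length_append, hW2]
      have h1 := hgap (a+n) (by omega)
      have h2 : k*(n+1) = k*n + k := by ring
      omega
    · intro w hw
      rcases (Walk.mem_support_append_iff _ _).mp hw with hw | hw
      · exact hW1s w hw
      · refine ⟨a+n, by omega, ?_⟩
        rw [SimpleGraph.dist_comm]
        exact le_trans (dist_start_le_of_mem_support hw)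
          (by rw [hW2]; exact hgap _ (by omega))

lemma chain_walk' (hconn : Γ.Connected) {f : ℕ → V} {N k : ℕ}
    (hgap : ∀ i < N, Γ.dist (f i) (f (i+1)) ≤ k)
    {a b : ℕ} (ha : a ≤ N) (hb : b ≤ N) :
    ∃ W : Γ.Walk (f a) (f b), W.length ≤ k * (max a b - min a b) ∧
      ∀ w ∈ W.support, ∃ t ≤ N, Γ.dist w (f t) ≤ k := by
  rcases le_total a b with hab | hab
  · obtain ⟨W, h1, h2⟩ := chain_walk hconn hgap a (b - a) (by omega)
    refine ⟨W.copy rfl (congrArg f (by omega)), ?_, ?_⟩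
    · rw [Walk.length_copy, max_eq_right hab, min_eq_left hab]
      exact h1
    · intro w hw
      rw [Walk.support_copy] at hw
      exact h2 w hw
  · obtain ⟨W, h1, h2⟩ := chain_walk hconn hgap b (a - b) (by omega)
    refine ⟨(W.copy rfl (congrArg f (by omega))).reverse, ?_, ?_⟩
    · rw [Walk.length_reverse, Walk.length_copy, max_eq_left hab, min_eq_right hab]
      exact h1
    · intro w hw
      rw [Walk.support_reverse, List.mem_reverse, Walk.support_copy] at hw
      exact h2 w hw

lemma chain_dist (hconn : Γ.Connected) {f : ℕ → V} {N k : ℕ}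
    (hgap : ∀ i < N, Γ.dist (f i) (f (i+1)) ≤ k)
    {a b : ℕ} (hab : a ≤ b) (hb : b ≤ N) :
    Γ.dist (f a) (f b) ≤ k * (b - a) := by
  obtain ⟨W, hWl, -⟩ := chain_walk hconn hgap a (b - a) (by omega)
  have h := SimpleGraph.dist_le (W.copy rfl (congrArg f (by omega : a + (b - a) = b)))
  rw [Walk.length_copy] at h
  exact h.trans hWl

lemma discrete_ivt (h : ℕ → ℕ) (t : ℕ) : ∀ L, 1 ≤ L → h 0 ≤ t → t ≤ h L →
    ∃ s < L, min (h s) (h (s+1)) ≤ t ∧ t ≤ max (h s) (h (s+1)) := by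
  intro L
  induction L with
  | zero => intro h1; exact absurd h1 (by omega)
  | succ L IH =>
    intro _ h0 hL
    rcases Nat.eq_zero_or_pos L with rfl | hLpos
    · exact ⟨0, Nat.zero_lt_one, le_trans (min_le_left _ _) h0,
        le_trans hL (le_max_right _ _)⟩
    · by_cases hcase : t ≤ h L
      · obtain ⟨s, hs, h1, h2⟩ := IH hLpos h0 hcase
        exact ⟨s, by omega, h1, h2⟩
      · push_neg at hcase
        exact ⟨L, by omega, le_trans (min_le_left _ _) hcase.le,
          le_trans hL (le_max_right _ _)⟩

/-- Morse lemma, first half: every point of a geodesic is within `Ma δ k` of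
the chain. -/
lemma morse_a (hconn : Γ.Connected) {δ k : ℕ} (hk : 1 ≤ k) (hthin : Thin Γ δ)
    {f : ℕ → V} {N : ℕ}
    (hgap : ∀ i < N, Γ.dist (f i) (f (i+1)) ≤ k)
    (hqg : ∀ i j, i ≤ j → j ≤ N → j - i ≤ k * Γ.dist (f i) (f j))
    {a b : V} (γ : Γ.Walk a b) (ha : f 0 = a) (hb : f N = b)
    (hγ : Γ.IsGeodesic γ) :
    ∀ x ∈ γ.support, ∃ i ≤ N, Γ.dist x (f i) ≤ Ma δ k := by
  subst ha hb
  classical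
  have hsne : γ.support.toFinset.Nonempty :=
    ⟨f 0, List.mem_toFinset.mpr γ.start_mem_support⟩
  set md : V → ℕ := fun x => ((Finset.range (N+1)).image (fun i => Γ.dist x (f i))).min'
      (Finset.Nonempty.image ⟨0, Finset.mem_range.mpr (Nat.succ_pos N)⟩ _) with hmd
  set D := (γ.support.toFinset.image md).max' (hsne.image md) with hDdef
  have hmd_le : ∀ x : V, ∀ i ≤ N, md x ≤ Γ.dist x (f i) := by
    intro x i hi
    exact Finset.min'_le _ _ (Finset.mem_image.mpr
      ⟨i, Finset.mem_range.mpr (by omega), rfl⟩)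
  have hmd_ex : ∀ x : V, ∃ i ≤ N, Γ.dist x (f i) = md x := by
    intro x
    obtain ⟨i, hi, hei⟩ := Finset.mem_image.mp
      (Finset.min'_mem ((Finset.range (N+1)).image (fun i => Γ.dist x (f i))) _)
    exact ⟨i, by have := Finset.mem_range.mp hi; omega, hei⟩
  have h1 : ∀ x ∈ γ.support, ∃ i ≤ N, Γ.dist x (f i) ≤ D := by
    intro x hx
    obtain ⟨i, hi, hei⟩ := hmd_ex x
    refine ⟨i, hi, ?_⟩
    rw [hei]
    exact Finset.le_max' _ _ (Finset.mem_image.mpr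
      ⟨x, List.mem_toFinset.mpr hx, rfl⟩)
  have h2 : ∃ x₀ ∈ γ.support, ∀ i ≤ N, D ≤ Γ.dist x₀ (f i) := by
    obtain ⟨x₀, hx₀, hex⟩ := Finset.mem_image.mp
      (Finset.max'_mem (γ.support.toFinset.image md) (hsne.image md))
    refine ⟨x₀, List.mem_toFinset.mp hx₀, fun i hi => ?_⟩
    rw [hDdef, ← hex]
    exact hmd_le x₀ i hi
  suffices hDM : D ≤ Ma δ k by
    intro x hx
    obtain ⟨i, hi, hd⟩ := h1 x hx
    exact ⟨i, hi, hd.trans hDM⟩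
  by_cases hkD : D ≤ k
  · exact hkD.trans (k_le_Ma δ k)
  push_neg at hkD
  obtain ⟨x₀, hx₀, hx₀min⟩ := h2
  obtain ⟨s, hs_eq, hsle⟩ := Walk.mem_support_iff_exists_getVert.mp hx₀
  subst hs_eq
  set s₁ := s - 2*D with hs₁def
  set s₂ := min (s + 2*D) γ.length with hs₂def
  have hs₁s : s₁ ≤ s := by omega
  have hss₂ : s ≤ s₂ := by omega
  have hs₂L : s₂ ≤ γ.length := min_le_right _ _
  set y := γ.getVert s₁ with hydef
  set z := γ.getVert s₂ with hzdef
  have hy_mem : y ∈ γ.support := getVert_mem_support γ s₁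
  have hz_mem : z ∈ γ.support := getVert_mem_support γ s₂
  have hYC : ∃ iy ≤ N, Γ.dist y (f iy) ≤ D ∧ (s < 2*D → iy = 0) := by
    by_cases hcs : 2*D ≤ s
    · obtain ⟨iy, h1', h2'⟩ := h1 y hy_mem
      exact ⟨iy, h1', h2', by omega⟩
    · refine ⟨0, by omega, ?_, fun _ => rfl⟩
      have hz1 : s₁ = 0 := by omega
      rw [hydef, hz1, Walk.getVert_zero, SimpleGraph.dist_self]
      omega
  have hZC : ∃ iz ≤ N, Γ.dist z (f iz) ≤ D ∧ (γ.length < s + 2*D → iz = N) := by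
    by_cases hcs : s + 2*D ≤ γ.length
    · obtain ⟨iz, h1', h2'⟩ := h1 z hz_mem
      exact ⟨iz, h1', h2', by omega⟩
    · refine ⟨N, le_rfl, ?_, fun _ => rfl⟩
      have hz2 : s₂ = γ.length := by omega
      rw [hzdef, hz2, Walk.getVert_length, SimpleGraph.dist_self]
      omega
  obtain ⟨iy, hiyN, hdy, hiy0⟩ := hYC
  obtain ⟨iz, hizN, hdz, hizN'⟩ := hZC
  obtain ⟨Wy, hWyl⟩ := hconn.exists_walk_length_eq_dist y (f iy)
  obtain ⟨Wz, hWzl⟩ := hconn.exists_walk_length_eq_dist (f iz) z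
  obtain ⟨Wm, hWml, hWms⟩ := chain_walk' hconn hgap hiyN hizN
  have hdxy : Γ.dist (γ.getVert s) y ≤ 2*D := by
    rw [SimpleGraph.dist_comm]
    exact (dist_getVert_le γ hs₁s).trans (by omega)
  have hdxz : Γ.dist (γ.getVert s) z ≤ 2*D :=
    (dist_getVert_le γ hss₂).trans (by omega)
  -- all points of the connecting path are at distance ≥ D - k from x₀
  have hWy_pts : ∀ w ∈ Wy.support, D ≤ Γ.dist (γ.getVert s) w + k := by
    intro w hw
    have hyw : Γ.dist y w ≤ D :=
      (dist_start_le_of_mem_support hw).trans (le_trans (le_of_eq hWyl) hdy)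
    by_cases hcs : 2*D ≤ s
    · have h2D : Γ.dist (γ.getVert s) y = 2*D := by
        rw [SimpleGraph.dist_comm, dist_getVert_eq hγ hs₁s hsle]
        omega
      have htri : Γ.dist (γ.getVert s) y ≤ Γ.dist (γ.getVert s) w + Γ.dist w y :=
        hconn.dist_triangle
      have hcomm : Γ.dist w y = Γ.dist y w := SimpleGraph.dist_comm
      omega
    · push_neg at hcs
      have hiy0' := hiy0 hcs
      have hy0 : y = f 0 := by
        rw [hydef, show s₁ = 0 by omega, Walk.getVert_zero]
      have hlen0 : Wy.length = 0 := by
        rw [hWyl, hiy0', ← hy0, SimpleGraph.dist_self]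
      have hwy : w = y := by
        have h5 := dist_start_le_of_mem_support hw
        rw [hlen0] at h5
        exact ((hconn.dist_eq_zero_iff).mp (Nat.le_zero.mp h5)).symm
      rw [hwy, hy0]
      exact le_trans (hx₀min 0 (Nat.zero_le N)) (Nat.le_add_right _ _)
  have hWz_pts : ∀ w ∈ Wz.support, D ≤ Γ.dist (γ.getVert s) w + k := by
    intro w hw
    have hw' : w ∈ Wz.reverse.support := by
      rw [Walk.support_reverse, List.mem_reverse]; exact hw
    have hyw : Γ.dist z w ≤ D := by
      refine (dist_start_le_of_mem_support hw').trans ?_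
      rw [Walk.length_reverse, hWzl, SimpleGraph.dist_comm]
      exact hdz
    by_cases hcs : s + 2*D ≤ γ.length
    · have h2D : Γ.dist (γ.getVert s) z = 2*D := by
        rw [dist_getVert_eq hγ hss₂ hs₂L]
        omega
      have htri : Γ.dist (γ.getVert s) z ≤ Γ.dist (γ.getVert s) w + Γ.dist w z :=
        hconn.dist_triangle
      have hcomm : Γ.dist w z = Γ.dist z w := SimpleGraph.dist_comm
      omega
    · push_neg at hcs
      have hizN'' := hizN' hcs
      have hzN : z = f N := by
        rw [hzdef, show s₂ = γ.length by omega, Walk.getVert_length]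
      have hlen0 : Wz.length = 0 := by
        rw [hWzl, hizN'', ← hzN, SimpleGraph.dist_self]
      have hwz : w = z := by
        have h5 := dist_start_le_of_mem_support hw
        rw [hlen0] at h5
        have h6 : f iz = w := (hconn.dist_eq_zero_iff).mp (Nat.le_zero.mp h5)
        rw [← h6, hizN'', hzN]
      rw [hwz, hzN]
      exact le_trans (hx₀min N le_rfl) (Nat.le_add_right _ _)
  have hWm_pts : ∀ w ∈ Wm.support, D ≤ Γ.dist (γ.getVert s) w + k := by
    intro w hw
    obtain ⟨t, htN, hwt⟩ := hWms w hw
    have h5 := hx₀min t htN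
    have htri : Γ.dist (γ.getVert s) (f t) ≤ Γ.dist (γ.getVert s) w + Γ.dist w (f t) :=
      hconn.dist_triangle
    omega
  set π := Wy.append (Wm.append Wz) with hπdef
  have hπ_pts : ∀ w ∈ π.support, D ≤ Γ.dist (γ.getVert s) w + k := by
    intro w hw
    rcases (Walk.mem_support_append_iff _ _).mp hw with h | h
    · exact hWy_pts w h
    rcases (Walk.mem_support_append_iff _ _).mp h with h | h
    · exact hWm_pts w h
    · exact hWz_pts w h
  have hdyz : Γ.dist (f iy) (f iz) ≤ 6*D := by
    have t1 : Γ.dist (f iy) z ≤ Γ.dist (f iy) (γ.getVert s) + Γ.dist (γ.getVert s) z :=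
      hconn.dist_triangle
    have t2 : Γ.dist (f iy) (γ.getVert s) ≤ Γ.dist (f iy) y + Γ.dist y (γ.getVert s) :=
      hconn.dist_triangle
    have t3 : Γ.dist (f iy) (f iz) ≤ Γ.dist (f iy) z + Γ.dist z (f iz) :=
      hconn.dist_triangle
    have c1 : Γ.dist (f iy) y = Γ.dist y (f iy) := SimpleGraph.dist_comm
    have c2 : Γ.dist y (γ.getVert s) = Γ.dist (γ.getVert s) y := SimpleGraph.dist_comm
    omega
  have hmm : max iy iz - min iy iz ≤ k * Γ.dist (f iy) (f iz) := by
    rcases le_total iy iz with h | h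
    · rw [max_eq_right h, min_eq_left h]
      exact hqg iy iz h hizN
    · rw [max_eq_left h, min_eq_right h, SimpleGraph.dist_comm]
      exact hqg iz iy h hiyN
  have hWml' : Wm.length ≤ k*(k*(6*D)) :=
    le_trans hWml (Nat.mul_le_mul_left k
      (le_trans hmm (Nat.mul_le_mul_left k hdyz)))
  have hπl : π.length ≤ 8*(k*k)*D := by
    have he : π.length = Wy.length + (Wm.length + Wz.length) := by
      rw [hπdef, Walk.length_append, Walk.length_append]
    have hWy' : Wy.length ≤ D := le_trans (le_of_eq hWyl) hdy
    have hWz' : Wz.length ≤ D := by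
      rw [hWzl, SimpleGraph.dist_comm]; exact hdz
    have e3 : D ≤ (k*k)*D := by
      calc D = 1*D := (one_mul D).symm
        _ ≤ (k*k)*D := Nat.mul_le_mul_right D (Nat.mul_le_mul hk hk)
    calc π.length ≤ D + (k*(k*(6*D)) + D) := by
          rw [he]; exact Nat.add_le_add hWy' (Nat.add_le_add hWml' hWz')
      _ = 6*((k*k)*D) + 2*D := by ring
      _ ≤ 6*((k*k)*D) + 2*((k*k)*D) := Nat.add_le_add_left (Nat.mul_le_mul_left 2 e3) _
      _ = 8*(k*k)*D := by ring
  have hs₁₂ : s₁ ≤ s₂ := le_trans hs₁s hss₂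
  set γ' := segW γ s₁ s₂ hs₁₂ with hγ'def
  have hγ'len : γ'.length = s₂ - s₁ := by
    rw [hγ'def]
    simp only [segW, Walk.length_copy, length_takeW, length_dropW]
    omega
  have hγ'geo : Γ.IsGeodesic γ' := by
    unfold SimpleGraph.IsGeodesic
    rw [hγ'len, dist_getVert_eq hγ hs₁₂ hs₂L]
  have hx₀γ' : γ.getVert s ∈ γ'.support := by
    have he : γ'.getVert (s - s₁) = γ.getVert s := by
      rw [hγ'def]
      simp only [segW, Walk.getVert_copy]
      rw [getVert_takeW _ (by omega : s - s₁ ≤ s₂ - s₁), getVert_dropW]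
      congr 1
      omega
    rw [← he]
    exact getVert_mem_support γ' _
  obtain ⟨w, hwπ, hwd⟩ :=
    divergence hconn hthin (8*(k*k)*D) π hπl γ' hγ'geo (γ.getVert s) hx₀γ'
  have hfin := hπ_pts w hwπ
  refine morse_arith (by omega) ?_
  generalize hP : δ * Nat.clog 2 (8*(k*k)*D) = P at hwd ⊢
  omega

/-- Morse lemma, second half: every point of the chain is within `Mb δ k` of
the geodesic. -/
lemma morse_b (hconn : Γ.Connected) {δ k : ℕ} (hk : 1 ≤ k) (hthin : Thin Γ δ)
    {f : ℕ → V} {N : ℕ}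
    (hgap : ∀ i < N, Γ.dist (f i) (f (i+1)) ≤ k)
    (hqg : ∀ i j, i ≤ j → j ≤ N → j - i ≤ k * Γ.dist (f i) (f j))
    {a b : V} (γ : Γ.Walk a b) (ha : f 0 = a) (hb : f N = b)
    (hγ : Γ.IsGeodesic γ) :
    ∀ t ≤ N, ∃ x ∈ γ.support, Γ.dist (f t) x ≤ Mb δ k := by
  subst ha hb
  intro t ht
  rcases Nat.eq_zero_or_pos γ.length with hL0 | hLpos
  · have hdist0 : Γ.dist (f 0) (f N) = 0 := by rw [← hγ]; exact hL0
    have hN0 : N = 0 := by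
      have h5 := hqg 0 N (Nat.zero_le N) le_rfl
      rw [hdist0] at h5
      omega
    refine ⟨f 0, γ.start_mem_support, ?_⟩
    rw [show t = 0 by omega, SimpleGraph.dist_self]
    exact Nat.zero_le _
  · have hch : ∀ s : ℕ, ∃ i, i ≤ N ∧ Γ.dist (γ.getVert s) (f i) ≤ Ma δ k ∧
        (s = 0 → i = 0) ∧ (γ.length ≤ s → i = N) := by
      intro s
      rcases Nat.eq_zero_or_pos s with rfl | hs
      · refine ⟨0, Nat.zero_le N, ?_, fun _ => rfl, fun h => by omega⟩
        rw [Walk.getVert_zero, SimpleGraph.dist_self]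
        exact Nat.zero_le _
      rcases le_or_gt γ.length s with hLs | hLs
      · refine ⟨N, le_rfl, ?_, by omega, fun _ => rfl⟩
        rw [Walk.getVert_of_length_le γ hLs, SimpleGraph.dist_self]
        exact Nat.zero_le _
      · obtain ⟨i, hi, hdi⟩ := morse_a hconn hk hthin hgap hqg γ rfl rfl hγ
          (γ.getVert s) (getVert_mem_support γ s)
        exact ⟨i, hi, hdi, by omega, fun h => by omega⟩
    choose I hIN hILe hI0 hIL using hch
    have hI0' : I 0 = 0 := hI0 0 rfl
    have hIL' : I γ.length = N := hIL γ.length le_rfl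
    have hconsec : ∀ s, max (I s) (I (s+1)) - min (I s) (I (s+1)) ≤
        k * (2 * Ma δ k + 1) := by
      intro s
      have hd1 : Γ.dist (γ.getVert s) (γ.getVert (s+1)) ≤ 1 := by
        simpa using dist_getVert_le γ (Nat.le_succ s)
      have hdf : Γ.dist (f (I s)) (f (I (s+1))) ≤ 2 * Ma δ k + 1 := by
        have t1 : Γ.dist (f (I s)) (f (I (s+1))) ≤
            Γ.dist (f (I s)) (γ.getVert (s+1)) + Γ.dist (γ.getVert (s+1)) (f (I (s+1))) :=
          hconn.dist_triangle
        have t2 : Γ.dist (f (I s)) (γ.getVert (s+1)) ≤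
            Γ.dist (f (I s)) (γ.getVert s) + Γ.dist (γ.getVert s) (γ.getVert (s+1)) :=
          hconn.dist_triangle
        have c1 : Γ.dist (f (I s)) (γ.getVert s) = Γ.dist (γ.getVert s) (f (I s)) :=
          SimpleGraph.dist_comm
        have h5 := hILe s
        have h6 := hILe (s+1)
        omega
      rcases le_total (I s) (I (s+1)) with h | h
      · rw [max_eq_right h, min_eq_left h]
        exact le_trans (hqg _ _ h (hIN (s+1))) (Nat.mul_le_mul_left k hdf)
      · rw [max_eq_left h, min_eq_right h]
        refine le_trans (hqg _ _ h (hIN s)) (Nat.mul_le_mul_left k ?_)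
        rw [SimpleGraph.dist_comm]
        exact hdf
    obtain ⟨s, hsL, hmin, hmax⟩ := discrete_ivt I t γ.length hLpos
      (by rw [hI0']; exact Nat.zero_le t) (by rw [hIL']; exact ht)
    have key : ∀ a : ℕ, a ≤ N → a ≤ t →
        t - a ≤ k * (2 * Ma δ k + 1) →
        ∀ s' : ℕ, Γ.dist (γ.getVert s') (f a) ≤ Ma δ k →
        ∃ x ∈ γ.support, Γ.dist (f t) x ≤ Mb δ k := by
      intro a haN hat hta s' hds'
      refine ⟨γ.getVert s', getVert_mem_support γ s', ?_⟩
      have hdta : Γ.dist (f a) (f t) ≤ k * (t - a) := chain_dist hconn hgap hat ht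
      have hdta' : Γ.dist (f a) (f t) ≤ k * (k * (2 * Ma δ k + 1)) :=
        le_trans hdta (Nat.mul_le_mul_left k hta)
      have tri : Γ.dist (f t) (γ.getVert s') ≤
          Γ.dist (f t) (f a) + Γ.dist (f a) (γ.getVert s') := hconn.dist_triangle
      have c1 : Γ.dist (f t) (f a) = Γ.dist (f a) (f t) := SimpleGraph.dist_comm
      have c2 : Γ.dist (f a) (γ.getVert s') = Γ.dist (γ.getVert s') (f a) :=
        SimpleGraph.dist_comm
      unfold Mb
      omega
    rcases le_total (I s) (I (s+1)) with hcase | hcase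
    · rw [min_eq_left hcase] at hmin
      rw [max_eq_right hcase] at hmax
      refine key (I s) (hIN s) hmin ?_ s (hILe s)
      have := hconsec s
      rw [max_eq_right hcase, min_eq_left hcase] at this
      omega
    · rw [min_eq_right hcase] at hmin
      rw [max_eq_left hcase] at hmax
      refine key (I (s+1)) (hIN (s+1)) hmin ?_ (s+1) (hILe (s+1))
      have := hconsec s
      rw [max_eq_left hcase, min_eq_right hcase] at this
      omega

/-! ### Transfer of hyperbolicity between bi-Lipschitz equivalent graphs -/

lemma dist_le_mul_of_edges {V : Type*} {Γ₁ Γ₂ : SimpleGraph V} (h2 : Γ₂.Connected)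
    {k : ℕ} (h12 : ∀ u v, Γ₁.Adj u v → Γ₂.dist u v ≤ k) :
    ∀ {u v : V} (W : Γ₁.Walk u v), Γ₂.dist u v ≤ k * W.length := by
  intro u v W
  induction W with
  | nil => simp [SimpleGraph.dist_self]
  | @cons a c d h p ih =>
    calc Γ₂.dist a d ≤ Γ₂.dist a c + Γ₂.dist c d := h2.dist_triangle
      _ ≤ k + k * p.length := Nat.add_le_add (h12 _ _ h) ih
      _ = k * (p.length + 1) := by ring
      _ = k * (Walk.cons h p).length := by rw [Walk.length_cons]

lemma dist_le_mul_dist {V : Type*} {Γ₁ Γ₂ : SimpleGraph V}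
    (h1 : Γ₁.Connected) (h2 : Γ₂.Connected)
    {k : ℕ} (h12 : ∀ u v, Γ₁.Adj u v → Γ₂.dist u v ≤ k) (u v : V) :
    Γ₂.dist u v ≤ k * Γ₁.dist u v := by
  obtain ⟨W, hW⟩ := h1.exists_walk_length_eq_dist u v
  rw [← hW]
  exact dist_le_mul_of_edges h2 h12 W

/-- Hyperbolicity transfers between two connected graphs on the same vertex set
whose edges have uniformly bounded distance in the other graph. -/
theorem transfer_hyperbolic {V : Type*} {Γ₁ Γ₂ : SimpleGraph V}
    (h1 : Γ₁.Connected) (h2 : Γ₂.Connected) {k : ℕ} (hk : 1 ≤ k)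
    (h21 : ∀ u v, Γ₂.Adj u v → Γ₁.dist u v ≤ k)
    (h12 : ∀ u v, Γ₁.Adj u v → Γ₂.dist u v ≤ k)
    (hyp : Γ₁.IsHyperbolic) : Γ₂.IsHyperbolic := by
  obtain ⟨δ, hthin⟩ := hyp
  have hd2le1 : ∀ u v : V, Γ₂.dist u v ≤ k * Γ₁.dist u v := by
    intro u v
    obtain ⟨W, hW⟩ := h1.exists_walk_length_eq_dist u v
    rw [← hW]
    exact dist_le_mul_of_edges h2 h12 W
  have hd1le2 : ∀ u v : V, Γ₁.dist u v ≤ k * Γ₂.dist u v := by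
    intro u v
    obtain ⟨W, hW⟩ := h2.exists_walk_length_eq_dist u v
    rw [← hW]
    exact dist_le_mul_of_edges h1 h21 W
  have hchain : ∀ {a b : V} (W : Γ₂.Walk a b), Γ₂.IsGeodesic W →
      (∀ i < W.length, Γ₁.dist (W.getVert i) (W.getVert (i+1)) ≤ k) ∧
      (∀ i j, i ≤ j → j ≤ W.length →
        j - i ≤ k * Γ₁.dist (W.getVert i) (W.getVert j)) := by
    intro a b W hW
    refine ⟨fun i hi => h21 _ _ (W.adj_getVert_succ hi), fun i j hij hj => ?_⟩
    rw [show j - i = Γ₂.dist (W.getVert i) (W.getVert j) from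
      (dist_getVert_eq hW hij hj).symm]
    exact hd2le1 _ _
  refine ⟨k * (Mb δ k + δ + Ma δ k), ?_⟩
  intro u v w p q r hp hq hr x hx
  obtain ⟨P, hP⟩ := h1.exists_walk_length_eq_dist u v
  obtain ⟨Q, hQ⟩ := h1.exists_walk_length_eq_dist v w
  obtain ⟨R, hR⟩ := h1.exists_walk_length_eq_dist u w
  obtain ⟨hgapr, hqgr⟩ := hchain r hr
  obtain ⟨a, ha_eq, haN⟩ := Walk.mem_support_iff_exists_getVert.mp hx
  obtain ⟨x', hx'R, hdx'⟩ := morse_b h1 hk hthin hgapr hqgr R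
    (r.getVert_zero) (r.getVert_length) hR a haN
  have hdx : Γ₁.dist x x' ≤ Mb δ k := ha_eq ▸ hdx'
  obtain ⟨y', hy', hdy'⟩ := hthin u v w P Q R hP hQ hR x' hx'R
  rcases hy' with hy' | hy'
  · obtain ⟨hgapp, hqgp⟩ := hchain p hp
    obtain ⟨i, hiN, hdi⟩ := morse_a h1 hk hthin hgapp hqgp P
      (p.getVert_zero) (p.getVert_length) hP y' hy'
    refine ⟨p.getVert i, Or.inl (getVert_mem_support p i), ?_⟩
    have tri1 : Γ₁.dist x y' ≤ Γ₁.dist x x' + Γ₁.dist x' y' := h1.dist_triangle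
    have tri2 : Γ₁.dist x (p.getVert i) ≤ Γ₁.dist x y' + Γ₁.dist y' (p.getVert i) :=
      h1.dist_triangle
    have htot : Γ₁.dist x (p.getVert i) ≤ Mb δ k + δ + Ma δ k := by omega
    exact le_trans (hd2le1 _ _) (Nat.mul_le_mul_left k htot)
  · obtain ⟨hgapq, hqgq⟩ := hchain q hq
    obtain ⟨i, hiN, hdi⟩ := morse_a h1 hk hthin hgapq hqgq Q
      (q.getVert_zero) (q.getVert_length) hQ y' hy'
    refine ⟨q.getVert i, Or.inr (getVert_mem_support q i), ?_⟩
    have tri1 : Γ₁.dist x y' ≤ Γ₁.dist x x' + Γ₁.dist x' y' := h1.dist_triangle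
    have tri2 : Γ₁.dist x (q.getVert i) ≤ Γ₁.dist x y' + Γ₁.dist y' (q.getVert i) :=
      h1.dist_triangle
    have htot : Γ₁.dist x (q.getVert i) ≤ Mb δ k + δ + Ma δ k := by omega
    exact le_trans (hd2le1 _ _) (Nat.mul_le_mul_left k htot)

/-! ### Cayley graphs -/

section Cayley

variable {G : Type*} [Group G]

/-- Left multiplication as a graph homomorphism of a Cayley graph. -/
@[simps] def cayleyHom (S : Set G) (a : G) : cayleyGraph G S →g cayleyGraph G S where
  toFun := fun x => a * x
  map_rel' := by
    intro u v h
    obtain ⟨hne, h⟩ := h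
    have e : ∀ x y : G, (a*x)⁻¹ * (a*y) = x⁻¹ * y := by
      intro x y
      group
    refine ⟨by simpa using hne, ?_⟩
    rw [e, e]
    exact h

lemma cayley_dist_mul (S : Set G) (a u v : G) :
    (cayleyGraph G S).dist (a*u) (a*v) = (cayleyGraph G S).dist u v := by
  have key : ∀ (b x y : G),
      (cayleyGraph G S).dist (b*x) (b*y) ≤ (cayleyGraph G S).dist x y := by
    intro b x y
    rcases eq_or_ne x y with rfl | hne
    · simp [SimpleGraph.dist_self]
    by_cases hr : (cayleyGraph G S).Reachable x y
    · obtain ⟨W, hW⟩ := hr.exists_walk_length_eq_dist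
      have h5 := SimpleGraph.dist_le (W.map (cayleyHom S b))
      rw [Walk.length_map, hW] at h5
      exact h5
    · rw [SimpleGraph.dist_eq_zero_of_not_reachable (show ¬ _ from fun hc => hr (by
        have h6 := hc.map (cayleyHom S b⁻¹)
        simpa [inv_mul_cancel_left] using h6))]
      exact Nat.zero_le _
  refine le_antisymm (key a u v) ?_
  have h7 := key a⁻¹ (a*u) (a*v)
  simpa [inv_mul_cancel_left] using h7

lemma cayley_dist_mul_right (S : Set G) (u s : G) :
    (cayleyGraph G S).dist u (u*s) = (cayleyGraph G S).dist 1 s := by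
  have h := cayley_dist_mul S u 1 s
  simpa using h

lemma cayley_dist_single {S : Set G} (u : G) {s : G} (hs : s ∈ S) :
    (cayleyGraph G S).dist u (u*s) ≤ 1 := by
  rcases eq_or_ne u (u*s) with h | h
  · rw [← h, SimpleGraph.dist_self]
    exact Nat.zero_le _
  · have hadj : (cayleyGraph G S).Adj u (u*s) :=
      ⟨h, Or.inl (by rw [inv_mul_cancel_left]; exact hs)⟩
    simpa using SimpleGraph.dist_le (Walk.cons hadj Walk.nil)

lemma cayley_connected {S : Set G} (h : Subgroup.closure S = ⊤) :
    (cayleyGraph G S).Connected := by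
  have key : ∀ x : G, (cayleyGraph G S).Reachable 1 x := by
    intro x
    have hx : x ∈ Subgroup.closure S := h ▸ Subgroup.mem_top x
    induction hx using Subgroup.closure_induction with
    | mem s hs =>
      rcases eq_or_ne (1 : G) s with he | hne
      · rw [← he]
      · exact (SimpleGraph.Adj.reachable ⟨hne, Or.inl (by simpa using hs)⟩)
    | one => exact SimpleGraph.Reachable.refl 1
    | mul a b ha hb iha ihb =>
      refine SimpleGraph.Reachable.trans iha ?_
      have h5 := ihb.map (cayleyHom S a)
      simpa [mul_one] using h5
    | inv a ha iha =>
      have h5 := iha.map (cayleyHom S a⁻¹)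
      have h6 : (cayleyGraph G S).Reachable a⁻¹ 1 := by
        simpa [mul_one] using h5
      exact h6.symm
  constructor
  intro a b
  exact (key a).symm.trans (key b)

end Cayley

end OsinAux

/-- **Lemma (Osin, Lemma 3.4).** Suppose that a group `G` is weakly hyperbolic relative
to `{A, B, C 0, …, C (m-1)}`, where `A` and `B` are conjugate subgroups of `G`. Then `G`
is weakly hyperbolic relative to `{A, C 0, …, C (m-1)}`. -/
theorem weakly_relatively_hyperbolic_drop_conjugate {G : Type*} [Group G]
    (A B : Subgroup G) (g : G) (hconj : B = Subgroup.map (MulAut.conj g).toMonoidHom A)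
    {m : ℕ} (C : Fin m → Subgroup G)
    (hG : IsWeaklyRelativelyHyperbolic G (Fin.cons A (Fin.cons B C))) :
    IsWeaklyRelativelyHyperbolic G (Fin.cons A C) := by
  classical
  obtain ⟨X, hXfin, hXgen, hXhyp⟩ := hG
  set S₁ : Set G := X ∪ ⋃ i, ((Fin.cons A (Fin.cons B C) : Fin (m+1+1) → Subgroup G) i : Set G) with hS₁def
  set S₂ : Set G := (X ∪ {g}) ∪ ⋃ i, ((Fin.cons A C : Fin (m+1) → Subgroup G) i : Set G) with hS₂def
  have hgen₁ : Subgroup.closure S₁ = ⊤ := hXgen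
  -- generators of `S₂`
  have hXsub : X ⊆ S₂ := fun a ha => Or.inl (Or.inl ha)
  have hgmem : g ∈ S₂ := Or.inl (Or.inr rfl)
  have hAsub : (A : Set G) ⊆ S₂ := fun a ha =>
    Or.inr (Set.mem_iUnion.mpr ⟨0, by simpa [Fin.cons_zero] using ha⟩)
  have hCsub : ∀ j : Fin m, (C j : Set G) ⊆ S₂ := fun j a ha =>
    Or.inr (Set.mem_iUnion.mpr ⟨j.succ, by simpa [Fin.cons_succ] using ha⟩)
  -- membership unpacking for `S₁`
  have hS₁mem : ∀ s ∈ S₁, s ∈ X ∨ s ∈ A ∨ s ∈ B ∨ ∃ j, s ∈ C j := by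
    intro s hs
    rcases hs with hs | hs
    · exact Or.inl hs
    · obtain ⟨i, hi⟩ := Set.mem_iUnion.mp hs
      rcases Fin.eq_zero_or_eq_succ i with rfl | ⟨j, rfl⟩
      · exact Or.inr (Or.inl (by simpa [Fin.cons_zero] using hi))
      · rcases Fin.eq_zero_or_eq_succ j with rfl | ⟨j', rfl⟩
        · exact Or.inr (Or.inr (Or.inl
            (by simpa [Fin.cons_succ, Fin.cons_zero] using hi)))
        · exact Or.inr (Or.inr (Or.inr ⟨j', by simpa [Fin.cons_succ] using hi⟩))
  -- `S₂` generates `G`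
  have hgen₂ : Subgroup.closure S₂ = ⊤ := by
    rw [eq_top_iff, ← hgen₁]
    refine (Subgroup.closure_le _).mpr ?_
    intro s hs
    rcases hS₁mem s hs with hs | hs | hs | ⟨j, hs⟩
    · exact Subgroup.subset_closure (hXsub hs)
    · exact Subgroup.subset_closure (hAsub hs)
    · rw [hconj] at hs
      obtain ⟨a, ha, rfl⟩ := hs
      have hga : g * a * g⁻¹ ∈ Subgroup.closure S₂ :=
        mul_mem (mul_mem (Subgroup.subset_closure hgmem)
          (Subgroup.subset_closure (hAsub ha)))
          (inv_mem (Subgroup.subset_closure hgmem))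
      simpa [MulAut.conj_apply] using hga
    · exact Subgroup.subset_closure (hCsub j hs)
  have conn₁ : (cayleyGraph G S₁).Connected := OsinAux.cayley_connected hgen₁
  have conn₂ : (cayleyGraph G S₂).Connected := OsinAux.cayley_connected hgen₂
  set k : ℕ := max ((cayleyGraph G S₁).dist 1 g) 3 with hkdef
  have hk : 1 ≤ k := le_trans (by omega) (le_max_right _ 3)
  -- distances of generators in the other graph
  have hs21 : ∀ s ∈ S₂, (cayleyGraph G S₁).dist 1 s ≤ k := by
    intro s hs
    rcases hs with (hs | hs) | hs
    · -- s ∈ X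
      have h5 := OsinAux.cayley_dist_single (S := S₁) 1 (Or.inl hs)
      rw [one_mul] at h5
      exact h5.trans (le_trans (by omega) (le_max_right _ 3))
    · -- s = g
      rw [Set.mem_singleton_iff] at hs
      subst hs
      exact le_max_left _ _
    · obtain ⟨i, hi⟩ := Set.mem_iUnion.mp hs
      have hmem : s ∈ S₁ := by
        rcases Fin.eq_zero_or_eq_succ i with rfl | ⟨j, rfl⟩
        · refine Or.inr (Set.mem_iUnion.mpr ⟨0, ?_⟩)
          simpa [Fin.cons_zero] using hi
        · refine Or.inr (Set.mem_iUnion.mpr ⟨j.succ.succ, ?_⟩)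
          simpa [Fin.cons_succ] using hi
      have h5 := OsinAux.cayley_dist_single (S := S₁) 1 hmem
      rw [one_mul] at h5
      exact h5.trans (le_trans (by omega) (le_max_right _ 3))
  have hs12 : ∀ s ∈ S₁, (cayleyGraph G S₂).dist 1 s ≤ k := by
    intro s hs
    have h3k : (3:ℕ) ≤ k := le_max_right _ 3
    rcases hS₁mem s hs with hs | hs | hs | ⟨j, hs⟩
    · have h5 := OsinAux.cayley_dist_single (S := S₂) 1 (hXsub hs)
      rw [one_mul] at h5
      omega
    · have h5 := OsinAux.cayley_dist_single (S := S₂) 1 (hAsub hs)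
      rw [one_mul] at h5
      omega
    · rw [hconj] at hs
      obtain ⟨a, ha, rfl⟩ := hs
      have d1 : (cayleyGraph G S₂).dist 1 g ≤ 1 := by
        have h5 := OsinAux.cayley_dist_single (S := S₂) 1 hgmem
        rwa [one_mul] at h5
      have d2 : (cayleyGraph G S₂).dist g (g*a) ≤ 1 :=
        OsinAux.cayley_dist_single (S := S₂) g (hAsub ha)
      have d3 : (cayleyGraph G S₂).dist (g*a) (g*a*g⁻¹) ≤ 1 := by
        have h5 := OsinAux.cayley_dist_single (S := S₂) (g*a*g⁻¹) hgmem
        rw [show g*a*g⁻¹*g = g*a by group] at h5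
        rw [SimpleGraph.dist_comm]
        exact h5
      have t1 : (cayleyGraph G S₂).dist 1 (g*a*g⁻¹) ≤
          (cayleyGraph G S₂).dist 1 (g*a) + (cayleyGraph G S₂).dist (g*a) (g*a*g⁻¹) :=
        conn₂.dist_triangle
      have t2 : (cayleyGraph G S₂).dist 1 (g*a) ≤
          (cayleyGraph G S₂).dist 1 g + (cayleyGraph G S₂).dist g (g*a) :=
        conn₂.dist_triangle
      have he : (MulAut.conj g).toMonoidHom a = g*a*g⁻¹ := by
        simp [MulAut.conj_apply]
      rw [he]
      omega
    · have h5 := OsinAux.cayley_dist_single (S := S₂) 1 (hCsub j hs)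
      rw [one_mul] at h5
      omega
  -- edge conditions
  have h21 : ∀ u v : G, (cayleyGraph G S₂).Adj u v → (cayleyGraph G S₁).dist u v ≤ k := by
    intro u v hadj
    obtain ⟨hne, hs | hs⟩ := hadj
    · have he : (cayleyGraph G S₁).dist u v = (cayleyGraph G S₁).dist 1 (u⁻¹*v) := by
        rw [← OsinAux.cayley_dist_mul_right S₁ u (u⁻¹*v), mul_inv_cancel_left]
      rw [he]
      exact hs21 _ hs
    · have he : (cayleyGraph G S₁).dist u v = (cayleyGraph G S₁).dist 1 (v⁻¹*u) := by
        rw [SimpleGraph.dist_comm,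
          ← OsinAux.cayley_dist_mul_right S₁ v (v⁻¹*u), mul_inv_cancel_left]
      rw [he]
      exact hs21 _ hs
  have h12 : ∀ u v : G, (cayleyGraph G S₁).Adj u v → (cayleyGraph G S₂).dist u v ≤ k := by
    intro u v hadj
    obtain ⟨hne, hs | hs⟩ := hadj
    · have he : (cayleyGraph G S₂).dist u v = (cayleyGraph G S₂).dist 1 (u⁻¹*v) := by
        rw [← OsinAux.cayley_dist_mul_right S₂ u (u⁻¹*v), mul_inv_cancel_left]
      rw [he]
      exact hs12 _ hs
    · have he : (cayleyGraph G S₂).dist u v = (cayleyGraph G S₂).dist 1 (v⁻¹*u) := by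
        rw [SimpleGraph.dist_comm,
          ← OsinAux.cayley_dist_mul_right S₂ v (v⁻¹*u), mul_inv_cancel_left]
      rw [he]
      exact hs12 _ hs
  refine ⟨X ∪ {g}, hXfin.union (Set.finite_singleton g), hgen₂, ?_⟩
  exact OsinAux.transfer_hyperbolic conn₁ conn₂ hk h21 h12 hXhyp
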